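/- Fix integers m ≥ 1, u_max ≥ 1 and R ≥ 0, an m×n real matrix A, a contiguous column partition Φ = (Φ_1,…,Φ_L) of {1,…,n} with part sizes w_l = |Φ_l|, and real coefficient vectors α : ℕ → ℝ and β_row, β_col : ℕ × {1,…,R} → ℝ. For 1 ≤ i < i′ ≤ m+1 let γ(i,i′) := { l ∈ {1,…,L} : A[r,j] ≠ 0 for some i ≤ r ≤ i′−1 and some j ∈ Φ_l }. For a contiguous row partition Π of {1,…,m} with parts Π_k = {t_{k−1},…,t_k−1} (where 1 = t_0 < t_1 < ⋯ < t_K = m+1), define cost(Π) := Σ_{k=1}^{K} [ α(t_k − t_{k−1}) + Σ_{l ∈ γ(t_{k−1},t_k)} Σ_{r=1}^{R} β_row(t_k − t_{k−1}, r)·β_col(w_l, r) ]. Define c(m+1) := 0 and, backwards for i = m, m−1, …, 1, c(i) := min over 1 ≤ u ≤ min(u_max, m+1−i) of [ α(u) + Σ_{r=1}^{R} β_row(u,r)·( Σ_{l ∈ γ(i,i+u)} β_col(w_l,r) ) + c(i+u) ]. Then c(1) is equal to the minimum of cost(Π) over all contiguous row partitions Π of {1,…,m} in which every part has size at most u_max.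 -/

import Mathlib

open Finset
open scoped Classical

/-- A contiguous partition of `{0, …, m-1}` into `K` nonempty consecutive intervals,
represented by its split points `t 0 = 0 < t 1 < ⋯ < t K = m`; the `k`-th part
(for `0 ≤ k < K`) is the interval `[t k, t (k+1))`. -/
structure ContigPartition (m : ℕ) where
  K : ℕ
  t : ℕ → ℕ
  t0 : t 0 = 0
  tK : t K = m
  mono : ∀ k < K, t k < t (k + 1)

/-- Block `(k, l)` of `A` (rows from part `k` of `P`, columns from part `l` of `Q`)
contains a nonzero entry of `A`. -/
def blockNonzero {m n : ℕ} (A : Matrix (Fin m) (Fin n) ℝ)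
    (P : ContigPartition m) (Q : ContigPartition n) (k l : ℕ) : Prop :=
  ∃ i : Fin m, ∃ j : Fin n,
    P.t k ≤ (i : ℕ) ∧ (i : ℕ) < P.t (k + 1) ∧
    Q.t l ≤ (j : ℕ) ∧ (j : ℕ) < Q.t (l + 1) ∧ A i j ≠ 0

/-- `N_index(A, P, Q)`: the number of nonzero blocks. -/
noncomputable def Nindex {m n : ℕ} (A : Matrix (Fin m) (Fin n) ℝ)
    (P : ContigPartition m) (Q : ContigPartition n) : ℕ :=
  ((Finset.range P.K ×ˢ Finset.range Q.K).filter
    (fun kl => blockNonzero A P Q kl.1 kl.2)).card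

/-- `N_value(A, P, Q)`: the total number of entries in all nonzero blocks. -/
noncomputable def Nvalue {m n : ℕ} (A : Matrix (Fin m) (Fin n) ℝ)
    (P : ContigPartition m) (Q : ContigPartition n) : ℕ :=
  ∑ kl ∈ (Finset.range P.K ×ˢ Finset.range Q.K).filter
      (fun kl => blockNonzero A P Q kl.1 kl.2),
    (P.t (kl.1 + 1) - P.t kl.1) * (Q.t (kl.2 + 1) - Q.t kl.2)

/-- `γ(i, i')`: the set of column parts of `Q` containing a nonzero entry of `A`
in some row `r` with `i ≤ r < i'`. -/
noncomputable def gam {m n : ℕ} (A : Matrix (Fin m) (Fin n) ℝ)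
    (Q : ContigPartition n) (i i' : ℕ) : Finset ℕ :=
  (Finset.range Q.K).filter (fun l => ∃ r : Fin m, ∃ j : Fin n,
    i ≤ (r : ℕ) ∧ (r : ℕ) < i' ∧ Q.t l ≤ (j : ℕ) ∧ (j : ℕ) < Q.t (l + 1) ∧ A r j ≠ 0)

/-- The rank-`R` cost of a row partition `P` (with the column partition `Q`
fixed, so the constant column terms are omitted):
`Σ_k [ α(u_k) + Σ_{l ∈ γ_k} Σ_r β_row(u_k, r) · β_col(w_l, r) ]`. -/
noncomputable def rowCost {m n : ℕ} (A : Matrix (Fin m) (Fin n) ℝ)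
    (P : ContigPartition m) (Q : ContigPartition n)
    (R : ℕ) (α : ℕ → ℝ) (βrow βcol : ℕ → ℕ → ℝ) : ℝ :=
  ∑ k ∈ Finset.range P.K,
    (α (P.t (k + 1) - P.t k) +
      ∑ l ∈ gam A Q (P.t k) (P.t (k + 1)),
        ∑ r ∈ Finset.range R,
          βrow (P.t (k + 1) - P.t k) r * βcol (Q.t (l + 1) - Q.t l) r)

/-- Optimality of the dynamic-programming row partitioner: if `c` satisfies the
backwards recurrence `c m = 0` and, for `i < m`,
`c i = min_{1 ≤ u ≤ min(u_max, m − i)} [α(u) + Σ_r β_row(u,r)·Σ_{l ∈ γ(i,i+u)} β_col(w_l,r) + c (i+u)]`,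
then `c 0` is the minimum of `rowCost` over all contiguous row partitions whose
parts all have size at most `u_max`. -/
theorem dp_row_partition_optimal {m n : ℕ} (hm : 1 ≤ m)
    (u_max : ℕ) (hu : 1 ≤ u_max) (R : ℕ)
    (A : Matrix (Fin m) (Fin n) ℝ) (Q : ContigPartition n)
    (α : ℕ → ℝ) (βrow βcol : ℕ → ℕ → ℝ)
    (c : ℕ → ℝ) (hcm : c m = 0)
    (hrec : ∀ i, ∀ hi : i < m,
      c i = (Finset.Icc 1 (min u_max (m - i))).inf'
        (Finset.nonempty_Icc.mpr (le_min hu (by omega)))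
        (fun u => α u +
          (∑ r ∈ Finset.range R,
            βrow u r * ∑ l ∈ gam A Q i (i + u), βcol (Q.t (l + 1) - Q.t l) r) +
          c (i + u))) :
    IsLeast { x : ℝ | ∃ P : ContigPartition m,
        (∀ k < P.K, P.t (k + 1) - P.t k ≤ u_max) ∧
        rowCost A P Q R α βrow βcol = x } (c 0) := by
  
  classical
  have swap : ∀ (u : ℕ) (s : Finset ℕ),
      (∑ r ∈ Finset.range R, βrow u r * ∑ l ∈ s, βcol (Q.t (l + 1) - Q.t l) r)
        = ∑ l ∈ s, ∑ r ∈ Finset.range R, βrow u r * βcol (Q.t (l + 1) - Q.t l) r := by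
    intro u s
    simp_rw [Finset.mul_sum]
    exact Finset.sum_comm
  constructor
  · -- existence of an optimal partition
    have hchoice : ∀ i, i < m → ∃ u, 1 ≤ u ∧ u ≤ u_max ∧ u ≤ m - i ∧
        c i = α u + (∑ r ∈ Finset.range R,
            βrow u r * ∑ l ∈ gam A Q i (i + u), βcol (Q.t (l + 1) - Q.t l) r) + c (i + u) := by
      intro i hi
      obtain ⟨u, hmem, hval⟩ := Finset.exists_mem_eq_inf'
        (s := Finset.Icc 1 (min u_max (m - i)))
        (Finset.nonempty_Icc.mpr (le_min hu (show 1 ≤ m - i by omega)))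
        (fun u => α u + (∑ r ∈ Finset.range R,
            βrow u r * ∑ l ∈ gam A Q i (i + u), βcol (Q.t (l + 1) - Q.t l) r) + c (i + u))
      rw [Finset.mem_Icc, le_min_iff] at hmem
      exact ⟨u, hmem.1, hmem.2.1, hmem.2.2, by rw [hrec i hi, hval]⟩
    set g : ℕ → ℕ := fun i => if h : i < m then i + (hchoice i h).choose else m with hgdef
    have hg : ∀ i, i < m → i < g i ∧ g i ≤ m ∧ g i - i ≤ u_max ∧
        c i = α (g i - i) + (∑ r ∈ Finset.range R,
            βrow (g i - i) r * ∑ l ∈ gam A Q i (g i), βcol (Q.t (l + 1) - Q.t l) r) + c (g i) := by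
      intro i h
      obtain ⟨h1, h2, h3, h4⟩ := (hchoice i h).choose_spec
      have hgi : g i = i + (hchoice i h).choose := by simp [hgdef, h]
      refine ⟨by omega, by omega, by omega, ?_⟩
      rw [hgi, show i + (hchoice i h).choose - i = (hchoice i h).choose from by omega]
      exact h4
    have hgm : g m = m := by simp [hgdef]
    set t : ℕ → ℕ := fun k => g^[k] 0 with htdef
    have ht0 : t 0 = 0 := rfl
    have htsucc : ∀ k, t (k + 1) = g (t k) := fun k => Function.iterate_succ_apply' g k 0
    have htle : ∀ k, t k ≤ m := by
      intro k
      induction k with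
      | zero => omega
      | succ k ih =>
        rw [htsucc]
        rcases Nat.lt_or_ge (t k) m with h | h
        · exact (hg _ h).2.1
        · have : t k = m := by omega
          rw [this, hgm]
    have hreach : t m = m := by
      have key : ∀ k, t k = m ∨ k ≤ t k := by
        intro k
        induction k with
        | zero => right; omega
        | succ k ih =>
          rcases ih with h | h
          · left; rw [htsucc, h, hgm]
          · rcases Nat.lt_or_ge (t k) m with h' | h'
            · right
              have := (hg _ h').1
              rw [htsucc]; omega
            · left
              have h1 := htle k
              have h2 : t k = m := by omega
              rw [htsucc, h2, hgm]
      rcases key m with h | h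
      · exact h
      · have := htle m; omega
    have hex : ∃ k, t k = m := ⟨m, hreach⟩
    set K := Nat.find hex with hKdef
    have hKm : t K = m := Nat.find_spec hex
    have hlt : ∀ k, k < K → t k < m := fun k hk =>
      lt_of_le_of_ne (htle k) (Nat.find_min hex hk)
    refine ⟨⟨K, t, ht0, hKm, fun k hk => by rw [htsucc]; exact (hg _ (hlt k hk)).1⟩, ?_, ?_⟩
    · intro k hk
      show t (k + 1) - t k ≤ u_max
      rw [htsucc]
      exact (hg _ (hlt k hk)).2.2.1
    · show (∑ k ∈ Finset.range K,
        (α (t (k + 1) - t k) +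
          ∑ l ∈ gam A Q (t k) (t (k + 1)),
            ∑ r ∈ Finset.range R,
              βrow (t (k + 1) - t k) r * βcol (Q.t (l + 1) - Q.t l) r)) = c 0
      have key : ∀ d k, k + d = K →
          (∑ k' ∈ Finset.Ico k K,
            (α (t (k' + 1) - t k') +
              ∑ l ∈ gam A Q (t k') (t (k' + 1)),
                ∑ r ∈ Finset.range R,
                  βrow (t (k' + 1) - t k') r * βcol (Q.t (l + 1) - Q.t l) r)) = c (t k) := by
        intro d
        induction d with
        | zero =>
          intro k hk
          have : k = K := by omega
          subst this
          simp [hKm, hcm]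
        | succ d ih =>
          intro k hk
          have hkK : k < K := by omega
          have hlt' := hlt k hkK
          rw [Finset.sum_eq_sum_Ico_succ_bot hkK, ih (k + 1) (by omega)]
          have h4 := (hg (t k) hlt').2.2.2
          rw [htsucc, h4, swap]
      have := key K 0 (by omega)
      rw [ht0] at this
      rw [show Finset.range K = Finset.Ico 0 K from Finset.range_eq_Ico _]
      exact this
  · rintro x ⟨P, hP, rfl⟩
    have mono_le : ∀ d k, k + d ≤ P.K → P.t k ≤ P.t (k + d) := by
      intro d
      induction d with
      | zero => intro k _; simp
      | succ d ih =>
        intro k h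
        have e : k + (d + 1) = k + d + 1 := rfl
        rw [e]
        have h1 := ih k (by omega)
        have h2 := P.mono (k + d) (by omega)
        omega
    have htleP : ∀ k, k ≤ P.K → P.t k ≤ m := by
      intro k hk
      have := mono_le (P.K - k) k (by omega)
      rw [show k + (P.K - k) = P.K from by omega, P.tK] at this
      exact this
    have key : ∀ d k, k + d = P.K →
        c (P.t k) ≤ ∑ k' ∈ Finset.Ico k P.K,
          (α (P.t (k' + 1) - P.t k') +
            ∑ l ∈ gam A Q (P.t k') (P.t (k' + 1)),
              ∑ r ∈ Finset.range R,
                βrow (P.t (k' + 1) - P.t k') r * βcol (Q.t (l + 1) - Q.t l) r) := by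
      intro d
      induction d with
      | zero =>
        intro k hk
        have : k = P.K := by omega
        subst this
        simp [P.tK, hcm]
      | succ d ih =>
        intro k hk
        have hkK : k < P.K := by omega
        have hmono := P.mono k hkK
        have hle1 : P.t (k + 1) ≤ m := htleP (k + 1) (by omega)
        have hltm : P.t k < m := by omega
        set u := P.t (k + 1) - P.t k with hudef
        have hu1 : 1 ≤ u := by omega
        have hu2 : u ≤ u_max := hP k hkK
        have hu3 : P.t k + u = P.t (k + 1) := by omega
        rw [Finset.sum_eq_sum_Ico_succ_bot hkK, hrec (P.t k) hltm]
        have hmem : u ∈ Finset.Icc 1 (min u_max (m - P.t k)) :=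
          Finset.mem_Icc.mpr ⟨hu1, le_min hu2 (by omega)⟩
        refine le_trans (Finset.inf'_le _ hmem) ?_
        rw [hu3, swap]
        have := ih (k + 1) (by omega)
        gcongr
    have := key P.K 0 (by omega)
    rw [P.t0] at this
    rw [rowCost, show Finset.range P.K = Finset.Ico 0 P.K from Finset.range_eq_Ico _]
    exact this
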